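/- For any composition β, the coefficient of X^α in the product h_β = Π_i h_{β_i} equals the number of finitely supported ℕ-valued matrices M with row sums α and column sums β. -/

import Mathlib

open scoped Classical

/-- The complete homogeneous symmetric function `h_d` in variables `X_0, X_1, …`,
as a power series: the sum of all monomials `X^α` over compositions `α` of `d`. -/
noncomputable def hsym (d : ℕ) : MvPowerSeries ℕ ℤ := fun m =>
  if m.sum (fun _ k => k) = d then 1 else 0

/-- Transpose of a finitely supported matrix. -/
noncomputable def trMat (l : ℕ →₀ (ℕ →₀ ℕ)) : ℕ →₀ (ℕ →₀ ℕ) :=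
  Finsupp.curry ((Finsupp.uncurry l).equivMapDomain (Equiv.prodComm ℕ ℕ))

lemma Finsupp.uncurry_apply' (f : ℕ →₀ (ℕ →₀ ℕ)) (a b : ℕ) :
    Finsupp.uncurry f (a, b) = f a b := by
  have h : Finsupp.curry (Finsupp.uncurry f) = f :=
    Finsupp.finsuppProdEquiv.right_inv f
  conv_rhs => rw [← h, Finsupp.curry_apply]

lemma trMat_apply (l : ℕ →₀ (ℕ →₀ ℕ)) (i j : ℕ) : trMat l i j = l j i := by
  rw [trMat, Finsupp.curry_apply, Finsupp.equivMapDomain_apply, Equiv.prodComm_symm,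
    Equiv.prodComm_apply, Prod.swap, Finsupp.uncurry_apply']

lemma trMat_trMat (l : ℕ →₀ (ℕ →₀ ℕ)) : trMat (trMat l) = l := by
  ext j i
  rw [trMat_apply, trMat_apply]

lemma trMat_injective : Function.Injective trMat :=
  Function.LeftInverse.injective trMat_trMat

/-- Column sum of `A` equals the sum of the `j`-th row of the transpose. -/
lemma col_sum_eq (A : ℕ →₀ (ℕ →₀ ℕ)) (j : ℕ) :
    (trMat A j).sum (fun _ k => k) = A.sum (fun _ r => r j) := by
  set T : Finset ℕ := (trMat A j).support ∪ A.support with hT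
  rw [Finsupp.sum_of_support_subset (trMat A j) (Finset.subset_union_left) _
      (fun _ _ => rfl),
    Finsupp.sum_of_support_subset A (Finset.subset_union_right) _
      (fun _ _ => rfl)]
  exact Finset.sum_congr rfl fun i _ => trMat_apply A j i

theorem coeff_hsym_prod_eq_card_matrices (β : ℕ → ℕ) (N : ℕ)
    (hβ : ∀ i, N ≤ i → β i = 0) (α : ℕ →₀ ℕ) :
    MvPowerSeries.coeff (R := ℤ) α (∏ i ∈ Finset.range N, hsym (β i)) =
      ({M : ℕ →₀ (ℕ →₀ ℕ) |
          (∀ i, (M i).sum (fun _ k => k) = α i) ∧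
          (∀ j, M.sum (fun _ r => r j) = β j)}.ncard : ℤ) := by
  classical
  rw [MvPowerSeries.coeff_prod]
  have hco : ∀ (m : ℕ →₀ ℕ) (d : ℕ),
      MvPowerSeries.coeff (R := ℤ) m (hsym d) = if m.sum (fun _ k => k) = d then 1 else 0 :=
    fun m d => rfl
  simp_rw [hco, Finset.prod_boole, Finset.sum_boole]
  set D : Finset (ℕ →₀ (ℕ →₀ ℕ)) :=
    (Finset.finsuppAntidiag (Finset.range N) α).filter
      (fun l => ∀ j ∈ Finset.range N, (l j).sum (fun _ k => k) = β j) with hD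
  have hset : {M : ℕ →₀ (ℕ →₀ ℕ) |
      (∀ i, (M i).sum (fun _ k => k) = α i) ∧
      (∀ j, M.sum (fun _ r => r j) = β j)} = trMat '' ↑D := by
    ext M
    simp only [Set.mem_setOf_eq, Set.mem_image, Finset.mem_coe, hD, Finset.mem_filter,
      Finset.mem_finsuppAntidiag]
    constructor
    · rintro ⟨hrow, hcol⟩
      refine ⟨trMat M, ⟨⟨?_, ?_⟩, ?_⟩, trMat_trMat M⟩
      · -- ∑ j in range N, trMat M j = α
        ext i
        rw [Finset.sum_apply']
        have hsub : (M i).support ⊆ Finset.range N := by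
          intro j hj
          rw [Finset.mem_range]
          by_contra h
          have hz : M.sum (fun _ r => r j) = 0 := (hcol j).trans (hβ j (le_of_not_gt h))
          rw [Finsupp.sum, Finset.sum_eq_zero_iff] at hz
          have : M i j = 0 := by
            by_cases hi : i ∈ M.support
            · exact hz i hi
            · rw [Finsupp.notMem_support_iff] at hi; simp [hi]
          exact Finsupp.mem_support_iff.mp hj this
        rw [← hrow i, Finsupp.sum_of_support_subset (M i) hsub _ (fun _ _ => rfl)]
        exact Finset.sum_congr rfl fun j _ => (trMat_apply M j i)
      · -- support ⊆ range N
        intro j hj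
        rw [Finsupp.mem_support_iff] at hj
        rw [Finset.mem_range]
        by_contra h
        apply hj
        ext i
        have hz : M.sum (fun _ r => r j) = 0 := (hcol j).trans (hβ j (le_of_not_gt h))
        rw [Finsupp.sum, Finset.sum_eq_zero_iff] at hz
        rw [trMat_apply]
        by_cases hi : i ∈ M.support
        · exact hz i hi
        · rw [Finsupp.notMem_support_iff] at hi; simp [hi]
      · intro j _
        rw [col_sum_eq]
        exact hcol j
    · rintro ⟨l, ⟨⟨hsum, hsupp⟩, hcols⟩, rfl⟩
      constructor
      · intro i
        have hsub : (trMat l i).support ⊆ Finset.range N := by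
          intro j hj
          rw [Finsupp.mem_support_iff, trMat_apply] at hj
          apply hsupp
          rw [Finsupp.mem_support_iff]
          intro h; apply hj; rw [h]; rfl
        rw [Finsupp.sum_of_support_subset (trMat l i) hsub _ (fun _ _ => rfl)]
        have := congrArg (fun f : ℕ →₀ ℕ => f i) hsum
        rw [Finset.sum_apply'] at this
        rw [← this]
        exact Finset.sum_congr rfl fun j _ => trMat_apply l i j
      · intro j
        rw [← col_sum_eq (trMat l) j, trMat_trMat]
        by_cases hj : j < N
        · exact hcols j (Finset.mem_range.mpr hj)
        · have hlj : l j = 0 := by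
            by_contra h
            exact hj (Finset.mem_range.mp (hsupp (Finsupp.mem_support_iff.mpr h)))
          have hz : (l j).sum (fun (_ : ℕ) (k : ℕ) => k) = 0 := by rw [hlj]; rfl
          rw [hz, hβ j (le_of_not_gt hj)]
  rw [hset, Set.ncard_image_of_injective _ trMat_injective, Set.ncard_coe_finset]
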